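/- arXiv:2007.09317 — 3 statements merged into one kernel-verified Lean document; each statement's English description precedes it below -/
import Mathlib

section
/- Lemma 2 (explicit AMSE for the multiple linear regression model, conditional on the missing pattern): if Zᵀ Ψ = 0, then (1/N) Σ_{i=1}^N E[((Z β̂)_i − (Z β)_i − n^{−1/2} ψ_i)²] = (1/(N n)) Ψᵀ (D R² D + I) Ψ + (σ²/N) tr(R), where β̂ := (Zᵀ D Z)⁻¹ Zᵀ u with u_i = Σ_{j=1}^{n_i} m_{ij} Y_{ij}, I is the N×N identity matrix, and tr denotes the matrix trace. -/
open Matrix MeasureTheory ProbabilityTheory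

theorem aux_second_moment {Ω : Type*} [MeasureSpace Ω] [IsProbabilityMeasure (ℙ : Measure Ω)]
    {ι : Type*} [Fintype ι] (Y : ι → Ω → ℝ)
    (hindep : iIndepFun Y ℙ)
    (hsq : ∀ k, MemLp (Y k) 2 ℙ) (a : ι → ℝ) (c : ℝ) :
    ∫ ω, ((∑ k, a k * Y k ω) - c) ^ 2
      = ((∑ k, a k * ∫ ω, Y k ω) - c) ^ 2 + ∑ k, a k ^ 2 * variance (Y k) ℙ := by
  classical
  set X : ι → Ω → ℝ := fun k ω => a k * Y k ω with hX
  have hXmem : ∀ k, MemLp (X k) 2 ℙ := fun k => (hsq k).const_mul (a k)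
  have hg : MemLp (∑ k, X k) 2 ℙ := memLp_finset_sum' _ (fun k _ => hXmem k)
  have hgint : Integrable (∑ k, X k) ℙ := hg.integrable one_le_two
  have hg2 : Integrable (fun ω => ((∑ k, X k) ω)^2) ℙ := by
    simpa [pow_two] using hg.integrable_sq
  have hvar : variance (∑ k, X k) ℙ = ∑ k, a k ^ 2 * variance (Y k) ℙ := by
    rw [IndepFun.variance_sum (fun k _ => hXmem k)
      (fun i _ j _ hij => ((hindep.indepFun hij).comp
        (measurable_const_mul (a i)) (measurable_const_mul (a j))))]
    exact Finset.sum_congr rfl fun k _ => variance_const_mul (a k) (Y k) ℙ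
  have hmean : ∫ ω, (∑ k, X k) ω = ∑ k, a k * ∫ ω, Y k ω := by
    simp only [Finset.sum_apply]
    rw [integral_finset_sum _ (fun k _ => ((hsq k).integrable one_le_two).const_mul _)]
    exact Finset.sum_congr rfl fun k _ => integral_const_mul _ _
  have hsq' : ∫ ω, ((∑ k, X k) ω)^2 = variance (∑ k, X k) ℙ + (∫ ω, (∑ k, X k) ω)^2 := by
    rw [variance_eq_sub hg]
    simp only [Pi.pow_apply]
    ring
  have expand : ∀ ω : Ω, ((∑ k, a k * Y k ω) - c)^2
      = ((∑ k, X k) ω)^2 - (2*c) * ((∑ k, X k) ω) + c^2 := by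
    intro ω; simp only [Finset.sum_apply, hX]; ring
  calc ∫ ω, ((∑ k, a k * Y k ω) - c) ^ 2
      = ∫ ω, (((∑ k, X k) ω)^2 - (2*c) * ((∑ k, X k) ω) + c^2) := by
        exact integral_congr_ae (Filter.Eventually.of_forall expand)
    _ = (∫ ω, (((∑ k, X k) ω)^2 - (2*c) * ((∑ k, X k) ω))) + ∫ (_ : Ω), c^2 :=
        integral_add (hg2.sub (hgint.const_mul _)) (integrable_const _)
    _ = (∫ ω, ((∑ k, X k) ω)^2) - (2*c) * (∫ ω, (∑ k, X k) ω) + c^2 := by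
        rw [integral_sub hg2 (hgint.const_mul _), integral_const_mul, integral_const]
        simp
    _ = _ := by rw [hsq', hvar, hmean]; ring

theorem stmt_10 {Ω : Type*} [MeasureSpace Ω] [IsProbabilityMeasure (ℙ : Measure Ω)]
    {N p : ℕ} (Z : Matrix (Fin N) (Fin p) ℝ)
    (ni : Fin N → ℕ) (m : (i : Fin N) → Fin (ni i) → ℝ)
    (hm : ∀ i j, m i j = 0 ∨ m i j = 1)
    (D : Matrix (Fin N) (Fin N) ℝ)
    (hD : D = Matrix.diagonal fun i => ∑ j, m i j)
    (hdet : IsUnit (Zᵀ * D * Z).det)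
    (R : Matrix (Fin N) (Fin N) ℝ)
    (hR : R = Z * (Zᵀ * D * Z)⁻¹ * Zᵀ)
    (n σ2 : ℝ) (hn : 0 < n)
    (β : Fin p → ℝ) (Ψ : Fin N → ℝ) (hΨ : Zᵀ *ᵥ Ψ = 0)
    (Y : (i : Fin N) → Fin (ni i) → Ω → ℝ)
    (hindep : iIndepFun
      (fun idx : Σ i : Fin N, Fin (ni i) => Y idx.1 idx.2) ℙ)
    (hsq : ∀ i j, MemLp (Y i j) 2 ℙ)
    (hmean : ∀ i j, ∫ ω, Y i j ω = (Z *ᵥ β) i + (Real.sqrt n)⁻¹ * Ψ i)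
    (hvar : ∀ i j, variance (Y i j) ℙ = σ2)
    (bhat : Ω → Fin p → ℝ)
    (hbhat : ∀ ω, bhat ω = ((Zᵀ * D * Z)⁻¹ * Zᵀ) *ᵥ (fun i => ∑ j, m i j * Y i j ω)) :
    (1 / N : ℝ) * ∑ i, ∫ ω, ((Z *ᵥ bhat ω) i - (Z *ᵥ β) i - (Real.sqrt n)⁻¹ * Ψ i) ^ 2
      = (1 / (N * n)) * (Ψ ⬝ᵥ ((D * (R * R) * D + 1) *ᵥ Ψ)) + (σ2 / N) * R.trace := by
  classical
  set s : ℝ := (Real.sqrt n)⁻¹ with hs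
  have hs2 : s ^ 2 = n⁻¹ := by
    rw [hs, inv_pow, Real.sq_sqrt hn.le]
  set dk : Fin N → ℝ := fun k => ∑ j, m k j with hdk
  set μv : Fin N → ℝ := fun k => (Z *ᵥ β) k + s * Ψ k with hμv
  set w : Fin N → ℝ := (R * D) *ᵥ Ψ - Ψ with hw
  -- matrix facts
  have hinv : (Zᵀ * D * Z)⁻¹ * (Zᵀ * D * Z) = 1 := Matrix.nonsing_inv_mul _ hdet
  have hRDZ : R * D * Z = Z := by
    rw [hR]
    calc Z * (Zᵀ * D * Z)⁻¹ * Zᵀ * D * Z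
        = Z * ((Zᵀ * D * Z)⁻¹ * (Zᵀ * D * Z)) := by simp only [Matrix.mul_assoc]
      _ = Z := by rw [hinv, Matrix.mul_one]
  have hRsym : Rᵀ = R := by
    rw [hR]
    simp only [Matrix.transpose_mul, Matrix.transpose_transpose,
      Matrix.transpose_nonsing_inv, hD, Matrix.diagonal_transpose, Matrix.mul_assoc]
  have hRe : ∀ a b, R a b = R b a := fun a b => by
    conv_lhs => rw [← hRsym]
    exact Matrix.transpose_apply R a b
  have hRΨ : R *ᵥ Ψ = 0 := by
    rw [hR, ← Matrix.mulVec_mulVec, ← Matrix.mulVec_mulVec, hΨ, Matrix.mulVec_zero,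
      Matrix.mulVec_zero]
  have hRDR : R * D * R = R := by
    nth_rewrite 2 [hR]
    simp only [← Matrix.mul_assoc]
    rw [hRDZ, ← hR]
  -- per-i integral
  have hZb : ∀ ω, Z *ᵥ bhat ω = R *ᵥ (fun k => ∑ j, m k j * Y k j ω) := by
    intro ω
    rw [hbhat, Matrix.mulVec_mulVec, ← Matrix.mul_assoc, ← hR]
  have hm2 : ∀ k j, m k j ^ 2 = m k j := fun k j => by rcases hm k j with h | h <;> simp [h]
  have hint : ∀ i, ∫ ω, ((Z *ᵥ bhat ω) i - (Z *ᵥ β) i - s * Ψ i) ^ 2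
      = n⁻¹ * (w i) ^ 2 + σ2 * ∑ k, (R i k) ^ 2 * dk k := by
    intro i
    have h1 : ∀ ω, (Z *ᵥ bhat ω) i - (Z *ᵥ β) i - s * Ψ i
        = (∑ idx : Σ k, Fin (ni k), (R i idx.1 * m idx.1 idx.2) * Y idx.1 idx.2 ω) - μv i := by
      intro ω
      rw [hZb, sub_sub]
      congr 1
      rw [← Finset.univ_sigma_univ, Finset.sum_sigma]
      simp only [Matrix.mulVec, dotProduct, Finset.mul_sum, mul_assoc]
    have h2 : ∫ ω, ((Z *ᵥ bhat ω) i - (Z *ᵥ β) i - s * Ψ i) ^ 2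
        = ((∑ idx : Σ k, Fin (ni k), (R i idx.1 * m idx.1 idx.2) * ∫ ω, Y idx.1 idx.2 ω)
            - μv i) ^ 2
          + ∑ idx : Σ k, Fin (ni k), (R i idx.1 * m idx.1 idx.2) ^ 2
              * variance (Y idx.1 idx.2) ℙ := by
      simp only [h1]
      exact aux_second_moment (fun idx : Σ k, Fin (ni k) => Y idx.1 idx.2) hindep
        (fun idx => hsq idx.1 idx.2) (fun idx => R i idx.1 * m idx.1 idx.2) (μv i)
    rw [h2]
    congr 1
    · -- bias term
      have hmean' : (∑ idx : Σ k, Fin (ni k), (R i idx.1 * m idx.1 idx.2) * ∫ ω, Y idx.1 idx.2 ω)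
          = ((R * D) *ᵥ μv) i := by
        rw [← Finset.univ_sigma_univ, Finset.sum_sigma]
        have hμvk : ∀ k : Fin N, (Z *ᵥ β) k + s * Ψ k = μv k := fun k => rfl
        simp only [hmean, hμvk, Matrix.mulVec, dotProduct, hD, Matrix.mul_diagonal, hdk,
          Finset.sum_mul, Finset.mul_sum]
        refine Finset.sum_congr rfl fun k _ => Finset.sum_congr rfl fun j _ => ?_
        try simp only [Matrix.mulVec, dotProduct, hμv]
        try ring
      rw [hmean']
      have hbias : (R * D) *ᵥ μv = Z *ᵥ β + s • ((R * D) *ᵥ Ψ) := by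
        have hμv' : μv = (Z *ᵥ β) + s • Ψ := by
          funext k; simp [hμv]
        rw [hμv', Matrix.mulVec_add, Matrix.mulVec_smul, Matrix.mulVec_mulVec, hRDZ]
      rw [hbias]
      have : (Z *ᵥ β + s • ((R * D) *ᵥ Ψ)) i - μv i = s * w i := by
        simp only [Pi.add_apply, Pi.smul_apply, smul_eq_mul, hμv, hw, Pi.sub_apply]
        try ring
      rw [this, mul_pow, hs2]
    · -- variance term
      rw [← Finset.univ_sigma_univ, Finset.sum_sigma]
      rw [Finset.mul_sum]
      refine Finset.sum_congr rfl fun k _ => ?_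
      simp only [hvar, mul_pow, hm2]
      rw [← Finset.sum_mul, ← Finset.mul_sum, hdk]
      ring
  simp only [← hs, hint]
  rw [Finset.sum_add_distrib, ← Finset.mul_sum, ← Finset.mul_sum]
  -- variance sum = trace
  have htr : (∑ i, ∑ k, (R i k) ^ 2 * dk k) = R.trace := by
    have h1 : ∑ i, ∑ k, (R i k) ^ 2 * dk k = (R * D * R).trace := by
      rw [Matrix.trace]
      refine Finset.sum_congr rfl fun q _ => ?_
      rw [Matrix.diag_apply, Matrix.mul_apply]
      refine Finset.sum_congr rfl fun k _ => ?_
      rw [hD, Matrix.mul_diagonal, hRe k q]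
      ring
    rw [h1, hRDR]
  -- bias sum = quadratic form
  have hbq : (∑ i, (w i) ^ 2) = Ψ ⬝ᵥ ((D * (R * R) * D + 1) *ᵥ Ψ) := by
    have hDRΨ : (D * R) *ᵥ Ψ = 0 := by
      rw [← Matrix.mulVec_mulVec, hRΨ, Matrix.mulVec_zero]
    have hT : R * D = (D * R)ᵀ := by
      rw [Matrix.transpose_mul, hRsym, hD, Matrix.diagonal_transpose]
    have hT' : D * R = (R * D)ᵀ := by
      rw [Matrix.transpose_mul, hRsym, hD, Matrix.diagonal_transpose]
    have hdot0 : Ψ ⬝ᵥ ((R * D) *ᵥ Ψ) = 0 := by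
      rw [dotProduct_mulVec, hT, Matrix.vecMul_transpose, hDRΨ, zero_dotProduct]
    have hvv : Ψ ⬝ᵥ ((D * (R * R) * D) *ᵥ Ψ) = ((R * D) *ᵥ Ψ) ⬝ᵥ ((R * D) *ᵥ Ψ) := by
      have hDRRD : D * (R * R) * D = (D * R) * (R * D) := by
        simp only [Matrix.mul_assoc]
      rw [hDRRD, ← Matrix.mulVec_mulVec Ψ (D * R) (R * D), dotProduct_mulVec Ψ (D * R),
        hT', Matrix.vecMul_transpose]
    calc ∑ i, (w i) ^ 2 = w ⬝ᵥ w := by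
          simp [dotProduct, pow_two]
      _ = ((R * D) *ᵥ Ψ) ⬝ᵥ ((R * D) *ᵥ Ψ) - Ψ ⬝ᵥ ((R * D) *ᵥ Ψ)
            - Ψ ⬝ᵥ ((R * D) *ᵥ Ψ) + Ψ ⬝ᵥ Ψ := by
          rw [hw, sub_dotProduct, dotProduct_sub, dotProduct_sub,
            dotProduct_comm Ψ ((R * D) *ᵥ Ψ)]
          ring
      _ = Ψ ⬝ᵥ ((D * (R * R) * D) *ᵥ Ψ) + Ψ ⬝ᵥ Ψ := by
          rw [← hvv, hdot0]; ring
      _ = Ψ ⬝ᵥ ((D * (R * R) * D + 1) *ᵥ Ψ) := by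
          rw [Matrix.add_mulVec, Matrix.one_mulVec, dotProduct_add]
  rw [htr, hbq]
  ring
end

section
/- Derivative of R(ξ,M) D_{ξM} with respect to a missing indicator (Appendix D): the map t ↦ Z (Zᵀ (D + t E) Z)⁻¹ Zᵀ (D + t E) from ℝ to N×N real matrices has derivative R E (I − R D) at t = 0, where R := Z (Zᵀ D Z)⁻¹ Zᵀ and I is the N×N identity matrix. -/
open Matrix

attribute [local instance] Matrix.linftyOpNormedRing Matrix.linftyOpNormedAlgebra

theorem stmt_15 {N p : ℕ} (Z : Matrix (Fin N) (Fin p) ℝ)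
    (d : Fin N → ℝ) (E : Matrix (Fin N) (Fin N) ℝ)
    (hdet : IsUnit (Zᵀ * Matrix.diagonal d * Z).det)
    (R : Matrix (Fin N) (Fin N) ℝ)
    (hR : R = Z * (Zᵀ * Matrix.diagonal d * Z)⁻¹ * Zᵀ) :
    ∀ i j : Fin N,
      HasDerivAt
        (fun t : ℝ =>
          (Z * (Zᵀ * (Matrix.diagonal d + t • E) * Z)⁻¹ * Zᵀ *
            (Matrix.diagonal d + t • E)) i j)
        ((R * E * (1 - R * Matrix.diagonal d)) i j) 0 := by
  intro i j
  set D : Matrix (Fin N) (Fin N) ℝ := Matrix.diagonal d with hD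
  set A0 : Matrix (Fin p) (Fin p) ℝ := Zᵀ * D * Z with hA0
  set B : Matrix (Fin p) (Fin p) ℝ := Zᵀ * E * Z with hB
  have hAunit : IsUnit A0 := (Matrix.isUnit_iff_isUnit_det _).mpr hdet
  set G' : Matrix (Fin p) (Fin p) ℝ := -(A0⁻¹ * B * A0⁻¹) with hG'
  -- derivative of the affine map
  have hf : HasDerivAt (fun t : ℝ => A0 + t • B) B 0 := by
    have h := ((hasDerivAt_id (0 : ℝ)).smul_const B).const_add A0
    simp only [id_eq, one_smul] at h
    exact h
  have hf0 : (fun t : ℝ => A0 + t • B) 0 = A0 := by simp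
  obtain ⟨u, hu⟩ := id hAunit
  have hinv0 : HasFDerivAt Ring.inverse
      (-(ContinuousLinearMap.mulLeftRight ℝ _ (↑u⁻¹) (↑u⁻¹)))
      ((fun t : ℝ => A0 + t • B) 0) := by
    rw [hf0, ← hu]
    exact hasFDerivAt_ringInverse (𝕜 := ℝ) u
  have hG : HasDerivAt (fun t : ℝ => (A0 + t • B)⁻¹) G' 0 := by
    have h := hinv0.comp_hasDerivAt 0 hf
    have hfun : (fun t : ℝ => Ring.inverse (A0 + t • B))
        = fun t : ℝ => (A0 + t • B)⁻¹ := by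
      funext t; rw [Matrix.nonsing_inv_eq_ringInverse]
    have hval : (-(ContinuousLinearMap.mulLeftRight ℝ _ (↑u⁻¹)
        (↑u⁻¹))) B = G' := by
      simp [ContinuousLinearMap.mulLeftRight_apply, hG',
        Matrix.coe_units_inv, hu, Matrix.mul_assoc]
    simp only [Function.comp_def] at h
    rw [hval] at h
    exact hfun ▸ h
  -- entrywise derivative of the inverse
  have hGkl : ∀ k l, HasDerivAt (fun t : ℝ => ((A0 + t • B)⁻¹) k l) (G' k l) 0 := by
    intro k l
    have hclm := (LinearMap.toContinuousLinearMap
      (Matrix.entryLinearMap ℝ ℝ k l)).hasFDerivAt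
      (x := ((fun t : ℝ => (A0 + t • B)⁻¹) 0))
    exact (hclm.comp_hasDerivAt 0 hG : )
  -- rewrite the target function entrywise
  have keyfun : ∀ t : ℝ,
      (Z * (Zᵀ * (D + t • E) * Z)⁻¹ * Zᵀ * (D + t • E)) i j
        = ∑ m, (∑ l, (∑ k, Z i k * ((A0 + t • B)⁻¹) k l) * Z m l)
            * (D m j + t * E m j) := by
    intro t
    have hAff : Zᵀ * (D + t • E) * Z = A0 + t • B := by
      rw [hA0, hB]
      simp [Matrix.mul_add, Matrix.add_mul, Matrix.mul_smul, Matrix.smul_mul]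
    rw [hAff]
    simp [Matrix.mul_apply, Matrix.transpose_apply, Matrix.add_apply,
      Matrix.smul_apply, smul_eq_mul]
  -- the main entrywise derivative computation
  have hmain : HasDerivAt
      (fun t : ℝ => ∑ m, (∑ l, (∑ k, Z i k * ((A0 + t • B)⁻¹) k l) * Z m l)
          * (D m j + t * E m j))
      (∑ m, ((∑ l, (∑ k, Z i k * G' k l) * Z m l) * D m j
          + (∑ l, (∑ k, Z i k * A0⁻¹ k l) * Z m l) * E m j)) 0 := by
    apply HasDerivAt.fun_sum
    intro m _
    have hu : HasDerivAt (fun t : ℝ => ∑ l, (∑ k, Z i k * ((A0 + t • B)⁻¹) k l) * Z m l)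
        (∑ l, (∑ k, Z i k * G' k l) * Z m l) 0 := by
      apply HasDerivAt.fun_sum
      intro l _
      exact (HasDerivAt.fun_sum fun k _ => (hGkl k l).const_mul (Z i k)).mul_const (Z m l)
    have hv : HasDerivAt (fun t : ℝ => D m j + t * E m j) (E m j) 0 := by
      simpa using ((hasDerivAt_id (0 : ℝ)).mul_const (E m j)).const_add (D m j)
    have := hu.fun_mul hv
    simpa using this
  -- matrix identity for the derivative value
  have hkey : Z * G' * Zᵀ * D + (Z * A0⁻¹ * Zᵀ) * E = R * E * (1 - R * D) := by
    subst hR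
    simp only [hG', hB, Matrix.mul_add, Matrix.add_mul, Matrix.mul_sub,
      Matrix.sub_mul, Matrix.mul_one, Matrix.one_mul, Matrix.mul_neg,
      Matrix.neg_mul, Matrix.mul_assoc, sub_eq_add_neg]
    abel
  have hfuneq : (fun t : ℝ =>
      (Z * (Zᵀ * (D + t • E) * Z)⁻¹ * Zᵀ * (D + t • E)) i j)
      = fun t : ℝ => ∑ m, (∑ l, (∑ k, Z i k * ((A0 + t • B)⁻¹) k l) * Z m l)
          * (D m j + t * E m j) := funext keyfun
  rw [hfuneq]
  convert hmain using 1
  rw [← hkey]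
  simp [Matrix.add_apply, Matrix.mul_apply, Matrix.transpose_apply,
    Finset.sum_add_distrib]
end

section
/- Derivative of the trace term with respect to the missing indicator at design point i (Appendix D): the map t ↦ tr( Z (Zᵀ (D + t·diag(e_i)) Z)⁻¹ Zᵀ ) from ℝ to ℝ has derivative −(R²)_{ii} at t = 0, where diag(e_i) is the N×N diagonal matrix whose only nonzero entry is a 1 in position (i,i), R := Z (Zᵀ D Z)⁻¹ Zᵀ, and (R²)_{ii} is the i-th diagonal entry of R·R. -/
open Matrix

attribute [local instance] Matrix.linftyOpNormedAddCommGroup Matrix.linftyOpNormedSpace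
  Matrix.linftyOpNormedRing Matrix.linftyOpNormedAlgebra

theorem stmt_16 {N p : ℕ} (Z : Matrix (Fin N) (Fin p) ℝ)
    (d : Fin N → ℝ)
    (hdet : IsUnit (Zᵀ * Matrix.diagonal d * Z).det)
    (R : Matrix (Fin N) (Fin N) ℝ)
    (hR : R = Z * (Zᵀ * Matrix.diagonal d * Z)⁻¹ * Zᵀ)
    (i : Fin N) :
    HasDerivAt
      (fun t : ℝ =>
        (Z * (Zᵀ * (Matrix.diagonal d + t • Matrix.diagonal (Pi.single i 1)) * Z)⁻¹ *
          Zᵀ).trace)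
      (-((R * R) i i)) 0 := by
  classical
  set A0 : Matrix (Fin p) (Fin p) ℝ := Zᵀ * Matrix.diagonal d * Z with hA0
  set E : Matrix (Fin N) (Fin N) ℝ := Matrix.diagonal (Pi.single i (1:ℝ)) with hE
  set B : Matrix (Fin p) (Fin p) ℝ := Zᵀ * E * Z with hB
  have hUnit : IsUnit A0 := (Matrix.isUnit_iff_isUnit_det A0).mpr hdet
  obtain ⟨u, hu⟩ := hUnit
  have huinv : (↑u⁻¹ : Matrix (Fin p) (Fin p) ℝ) = A0⁻¹ := by
    rw [← hu, Matrix.coe_units_inv]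
  -- linear map M ↦ trace (Z * M * Zᵀ)
  let L : Matrix (Fin p) (Fin p) ℝ →ₗ[ℝ] ℝ :=
    { toFun := fun M => (Z * M * Zᵀ).trace
      map_add' := by
        intro x y; simp [Matrix.mul_add, Matrix.add_mul]
      map_smul' := by
        intro c x; simp [Matrix.mul_smul, Matrix.smul_mul] }
  have hg : HasDerivAt (fun t : ℝ => A0 + t • B) B 0 := by
    have h := ((hasDerivAt_id (0:ℝ)).smul_const B).const_add A0
    rw [one_smul] at h; exact h
  have hinv : HasDerivAt (fun t : ℝ => Ring.inverse (A0 + t • B))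
      (-(A0⁻¹ * B * A0⁻¹)) 0 := by
    have h1 := hasFDerivAt_ringInverse (𝕜 := ℝ) u
    have h0 : (fun t : ℝ => A0 + t • B) 0 = ↑u := by simp [← hu]
    have h2 := (h0 ▸ h1).comp_hasDerivAt (0:ℝ) hg
    simp only [Function.comp_def, huinv] at h2; exact h2
  have hmain := (L.toContinuousLinearMap.hasFDerivAt).comp_hasDerivAt (0:ℝ) hinv
  have hval : L (-(A0⁻¹ * B * A0⁻¹)) = -((R * R) i i) := by
    have h3 : Z * (A0⁻¹ * B * A0⁻¹) * Zᵀ = R * E * R := by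
      rw [hR, hB]; simp only [Matrix.mul_assoc]
    show (Z * (-(A0⁻¹ * B * A0⁻¹)) * Zᵀ).trace = -((R * R) i i)
    rw [Matrix.mul_neg, Matrix.neg_mul, Matrix.trace_neg, h3, neg_inj,
      Matrix.trace_mul_cycle]
    simp [hE, Matrix.trace, Matrix.diag, Matrix.mul_apply, Matrix.diagonal_apply,
      Pi.single_apply, mul_ite, Finset.sum_ite_eq]
  have hfun : (fun t : ℝ => L (Ring.inverse (A0 + t • B))) =
      (fun t : ℝ =>
        (Z * (Zᵀ * (Matrix.diagonal d + t • Matrix.diagonal (Pi.single i 1)) * Z)⁻¹ *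
          Zᵀ).trace) := by
    funext t
    have : Zᵀ * (Matrix.diagonal d + t • Matrix.diagonal (Pi.single i 1)) * Z = A0 + t • B := by
      rw [hA0, hB, hE]
      rw [Matrix.mul_add, Matrix.add_mul, Matrix.mul_smul, Matrix.smul_mul]
    rw [this, Matrix.nonsing_inv_eq_ringInverse]
    rfl
  rw [← hfun, ← hval]
  exact hmain
end
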